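/- arXiv:2312.10019 — 6 statements merged into one kernel-verified Lean document; each statement's English description precedes it below -/
import Mathlib

section
/- Let μ be a probability measure on ℝⁿ × Bool that is linearly separable with margin d ≥ 0 via (w, b) and whose label marginal is uniform (each of the two classes has probability 1/2). Let I(X;Y) denote the true mutual information between input and label, i.e., the Kullback–Leibler divergence of μ with respect to the product of its two marginal distributions, and define the linear-probing MI estimate Î = log 2 − E_{(x,y)∼μ}[−log P̂(y|x)], where P̂ is the softmax predicted probability of the paper's linear probe. Then 0 ≤ I(X;Y) − Î < e^{−d}; in particular, the MI estimation error satisfies |I(X;Y) − Î| < e^{−d}. -/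
open MeasureTheory
open scoped BigOperators ENNReal Classical

/-- Kullback–Leibler divergence between two measures (as in Mathlib's later
`InformationTheory.KullbackLeibler`): `∫ log (dμ/dν) dμ` when `μ ≪ ν` and the
log-likelihood ratio is integrable, and `⊤` otherwise. -/
noncomputable def klDiv {Ω : Type*} [MeasurableSpace Ω] (μ ν : Measure Ω) : EReal :=
  if μ ≪ ν ∧ Integrable (llr μ ν) μ then ((∫ x, llr μ ν x ∂μ : ℝ) : EReal) else ⊤

/-- Logits of the paper's linear probe for binary classification:
class 0 (`false`) gets `w·x + b`, class 1 (`true`) gets `-(w·x + b) - d`. -/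
noncomputable def probeLogit {n : ℕ} (w : Fin n → ℝ) (b d : ℝ) (x : Fin n → ℝ) : Bool → ℝ
  | false => (∑ i, w i * x i) + b
  | true => -((∑ i, w i * x i) + b) - d

/-- Softmax predicted probability `P̂(y|x)` of the paper's linear probe. -/
noncomputable def probePred {n : ℕ} (w : Fin n → ℝ) (b d : ℝ) (x : Fin n → ℝ) (y : Bool) : ℝ :=
  Real.exp (probeLogit w b d x y) /
    (Real.exp (probeLogit w b d x false) + Real.exp (probeLogit w b d x true))

theorem stmt_0 {n : ℕ} (μ : Measure ((Fin n → ℝ) × Bool)) [IsProbabilityMeasure μ]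
    (w : Fin n → ℝ) (b d : ℝ) (hd : 0 ≤ d)
    -- linear separability with margin `d` via `(w, b)`
    (hsep : ∀ᵐ p ∂μ, (p.2 = false → 0 < (∑ i, w i * p.1 i) + b) ∧
      (p.2 = true → (∑ i, w i * p.1 i) + b < -d))
    -- the label marginal is uniform: each class has probability 1/2
    (hbal : μ.map Prod.snd {false} = 1/2)
    -- true mutual information: KL divergence of `μ` w.r.t. the product of its marginals
    (I : ℝ) (hI : (I : EReal) = klDiv μ ((μ.map Prod.fst).prod (μ.map Prod.snd)))
    -- linear-probing MI estimate: `log 2` minus the expected cross-entropy of the probe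
    (Ihat : ℝ)
    (hIhat : Ihat = Real.log 2 - ∫ p, -Real.log (probePred w b d p.1 p.2) ∂μ) :
    (0 ≤ I - Ihat ∧ I - Ihat < Real.exp (-d)) ∧ |I - Ihat| < Real.exp (-d) := by
  classical
  set t : (Fin n → ℝ) → ℝ := fun x => (∑ i, w i * x i) + b with ht
  have hmt : Measurable t := by
    apply Measurable.add _ measurable_const
    exact Finset.measurable_sum _ (fun i _ => (measurable_pi_apply i).const_mul _)
  set g : (Fin n → ℝ) → Bool := fun x => if t x < -d then true else false with hg
  have hmg : Measurable g :=
    Measurable.ite (measurableSet_lt hmt measurable_const) measurable_const measurable_const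
  have hae : ∀ᵐ p ∂μ, p.2 = g p.1 := by
    filter_upwards [hsep] with p hp
    rcases Bool.eq_false_or_eq_true p.2 with h2 | h2
    · have h := hp.2 h2
      rw [h2, hg]
      simp only []
      rw [if_pos (by dsimp only [t]; exact h)]
    · have h := hp.1 h2
      rw [h2, hg]
      simp only []
      rw [if_neg (by dsimp only [t]; linarith)]
  set μX := μ.map (Prod.fst : (Fin n → ℝ) × Bool → _) with hμX
  set μY := μ.map (Prod.snd : (Fin n → ℝ) × Bool → _) with hμY
  set ν := μX.prod μY with hν
  haveI : IsProbabilityMeasure μX := Measure.isProbabilityMeasure_map measurable_fst.aemeasurable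
  haveI : IsProbabilityMeasure μY := Measure.isProbabilityMeasure_map measurable_snd.aemeasurable
  have hYtrue : μY {true} = 1/2 := by
    have huniv : ({false} : Set Bool) ∪ {true} = Set.univ := by
      ext x; cases x <;> simp
    have h1 : μY {false} + μY {true} = 1 := by
      rw [← measure_union (by simp) (measurableSet_singleton _), huniv, measure_univ]
    rw [hbal] at h1
    have h2 : (1:ℝ≥0∞)/2 + μY {true} = 1/2 + 1/2 := by rw [h1, ENNReal.add_halves]
    exact (ENNReal.add_right_inj (by norm_num)).mp h2
  set S : Set ((Fin n → ℝ) × Bool) := {p | p.2 = g p.1} with hS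
  have hmS : MeasurableSet S := by
    have : S = (Prod.snd ⁻¹' {true} ∩ (fun p : (Fin n → ℝ) × Bool => g p.1) ⁻¹' {true}) ∪
        (Prod.snd ⁻¹' {false} ∩ (fun p : (Fin n → ℝ) × Bool => g p.1) ⁻¹' {false}) := by
      ext p
      rcases Bool.eq_false_or_eq_true p.2 with h2 | h2 <;>
        rcases Bool.eq_false_or_eq_true (g p.1) with h3 | h3 <;>
        simp [hS, h2, h3]
    rw [this]
    exact ((measurable_snd (measurableSet_singleton _)).inter
        ((hmg.comp measurable_fst) (measurableSet_singleton _))).union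
      ((measurable_snd (measurableSet_singleton _)).inter
        ((hmg.comp measurable_fst) (measurableSet_singleton _)))
  set f : (Fin n → ℝ) × Bool → ℝ≥0∞ := fun p => if p.2 = g p.1 then 2 else 0 with hf
  have hmf : Measurable f := Measurable.ite hmS measurable_const measurable_const
  have key : μ = ν.withDensity f := by
    ext E hE
    rw [withDensity_apply _ hE, ← lintegral_indicator hE f, hν,
      lintegral_prod _ ((hmf.indicator hE).aemeasurable)]
    have hinner : ∀ x : Fin n → ℝ,
        ∫⁻ y, E.indicator f (x, y) ∂μY =
          ({x | (x, g x) ∈ E} : Set (Fin n → ℝ)).indicator 1 x := by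
      intro x
      rw [lintegral_fintype]
      have h21 : (2:ℝ≥0∞) * 2⁻¹ = 1 := ENNReal.mul_inv_cancel (by norm_num) (by norm_num)
      have : (Finset.univ : Finset Bool) = {false, true} := by decide
      rw [this, Finset.sum_insert (by simp), Finset.sum_singleton, hbal, hYtrue]
      rcases Bool.eq_false_or_eq_true (g x) with h3 | h3 <;>
        by_cases hF : (x, false) ∈ E <;> by_cases hT : (x, true) ∈ E <;>
        simp [Set.indicator, hf, h3, hF, hT, Set.mem_setOf_eq, h21]
    rw [lintegral_congr hinner]
    have hmset : MeasurableSet {x : Fin n → ℝ | (x, g x) ∈ E} :=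
      (measurable_id.prodMk hmg) hE
    rw [lintegral_indicator_one hmset]
    rw [hμX, Measure.map_apply measurable_fst hmset]
    have hsets : E =ᵐ[μ] (Prod.fst ⁻¹' {x : Fin n → ℝ | (x, g x) ∈ E}) := by
      rw [Filter.eventuallyEq_set]
      filter_upwards [hae] with p hp
      simp only [Set.mem_preimage, Set.mem_setOf_eq]
      constructor
      · intro h; rwa [← hp, Prod.mk.eta]
      · intro h; rwa [← hp, Prod.mk.eta] at h
    exact measure_congr hsets
  have hac : μ ≪ ν := key ▸ withDensity_absolutelyContinuous ν f
  have hrnν : μ.rnDeriv ν =ᵐ[ν] f := by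
    rw [key]; exact Measure.rnDeriv_withDensity ν hmf
  have hrnμ : μ.rnDeriv ν =ᵐ[μ] f := hac.ae_eq hrnν
  have hllr : llr μ ν =ᵐ[μ] fun _ => Real.log 2 := by
    filter_upwards [hrnμ, hae] with p hp hp2
    rw [llr_def]
    simp only [hp, hf, if_pos hp2]
    norm_num
  have hint : Integrable (llr μ ν) μ := (integrable_const (Real.log 2)).congr hllr.symm
  have hIntVal : ∫ x, llr μ ν x ∂μ = Real.log 2 := by
    rw [integral_congr_ae hllr, integral_const, probReal_univ]
    simp
  have hI2 : I = Real.log 2 := by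
    rw [klDiv, if_pos ⟨hac, hint⟩, hIntVal] at hI
    exact_mod_cast hI
  set F : (Fin n → ℝ) × Bool → ℝ := fun p => -Real.log (probePred w b d p.1 p.2) with hF
  have hFfalse : ∀ x, F (x, false) = Real.log (1 + Real.exp (-(2 * t x) - d)) := by
    intro x
    have hl0 : probeLogit w b d x false = t x := rfl
    have hl1 : probeLogit w b d x true = -t x - d := rfl
    have hden : Real.exp (t x) + Real.exp (-t x - d) > 0 := by positivity
    have hsplit : Real.exp (t x) + Real.exp (-t x - d)
        = Real.exp (t x) * (1 + Real.exp (-(2 * t x) - d)) := by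
      rw [mul_add, mul_one, ← Real.exp_add]; ring_nf
    show -Real.log (probePred w b d x false) = _
    rw [probePred, hl0, hl1, Real.log_div (Real.exp_ne_zero _) (ne_of_gt hden), Real.log_exp,
      hsplit, Real.log_mul (Real.exp_ne_zero _) (by positivity), Real.log_exp]
    ring
  have hFtrue : ∀ x, F (x, true) = Real.log (1 + Real.exp (2 * t x + d)) := by
    intro x
    have hl0 : probeLogit w b d x false = t x := rfl
    have hl1 : probeLogit w b d x true = -t x - d := rfl
    have hden : Real.exp (t x) + Real.exp (-t x - d) > 0 := by positivity
    have hsplit : Real.exp (t x) + Real.exp (-t x - d)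
        = Real.exp (-t x - d) * (1 + Real.exp (2 * t x + d)) := by
      rw [mul_add, mul_one, ← Real.exp_add]; ring_nf
    show -Real.log (probePred w b d x true) = _
    rw [probePred, hl0, hl1, Real.log_div (Real.exp_ne_zero _) (ne_of_gt hden), Real.log_exp,
      hsplit, Real.log_mul (Real.exp_ne_zero _) (by positivity), Real.log_exp]
    ring
  have hFeq : ∀ p : (Fin n → ℝ) × Bool,
      F p = if p.2 = true then Real.log (1 + Real.exp (2 * t p.1 + d))
            else Real.log (1 + Real.exp (-(2 * t p.1) - d)) := by
    rintro ⟨x, y⟩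
    cases y
    · simpa using hFfalse x
    · simpa using hFtrue x
  have hmF : Measurable F := by
    have : F = fun p : (Fin n → ℝ) × Bool =>
        if p.2 = true then Real.log (1 + Real.exp (2 * t p.1 + d))
        else Real.log (1 + Real.exp (-(2 * t p.1) - d)) := funext hFeq
    rw [this]
    refine Measurable.ite (measurable_snd (measurableSet_singleton true)) ?_ ?_
    · exact (((hmt.comp measurable_fst).const_mul 2).add_const d).exp.const_add 1 |>.log
    · exact ((((hmt.comp measurable_fst).const_mul 2).neg).sub_const d).exp.const_add 1 |>.log
  -- nonneg everywhere
  have hFnonneg : ∀ p, 0 ≤ F p := by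
    intro p
    rw [hFeq]
    split
    · exact Real.log_nonneg (by nlinarith [Real.exp_pos (2 * t p.1 + d)])
    · exact Real.log_nonneg (by nlinarith [Real.exp_pos (-(2 * t p.1) - d)])
  -- a.e. strict upper bound
  have hFlt : ∀ᵐ p ∂μ, F p < Real.exp (-d) := by
    filter_upwards [hsep] with p hp
    rw [hFeq]
    rcases Bool.eq_false_or_eq_true p.2 with h2 | h2
    · have hlt : t p.1 < -d := hp.2 h2
      rw [if_pos h2]
      have h1 : Real.log (1 + Real.exp (2 * t p.1 + d)) < Real.exp (2 * t p.1 + d) := by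
        have := Real.add_one_le_exp (Real.exp (2 * t p.1 + d))
        have hx : (0:ℝ) < Real.exp (2 * t p.1 + d) := Real.exp_pos _
        calc Real.log (1 + Real.exp (2 * t p.1 + d))
            < (1 + Real.exp (2 * t p.1 + d)) - 1 :=
              Real.log_lt_sub_one_of_pos (by linarith) (by linarith)
          _ = Real.exp (2 * t p.1 + d) := by ring
      have h2' : Real.exp (2 * t p.1 + d) < Real.exp (-d) :=
        Real.exp_lt_exp.mpr (by linarith)
      linarith
    · have hgt : 0 < t p.1 := hp.1 h2
      rw [if_neg (by simp [h2])]
      have hx : (0:ℝ) < Real.exp (-(2 * t p.1) - d) := Real.exp_pos _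
      have h1 : Real.log (1 + Real.exp (-(2 * t p.1) - d)) < Real.exp (-(2 * t p.1) - d) := by
        calc Real.log (1 + Real.exp (-(2 * t p.1) - d))
            < (1 + Real.exp (-(2 * t p.1) - d)) - 1 :=
              Real.log_lt_sub_one_of_pos (by linarith) (by linarith)
          _ = Real.exp (-(2 * t p.1) - d) := by ring
      have h2' : Real.exp (-(2 * t p.1) - d) < Real.exp (-d) :=
        Real.exp_lt_exp.mpr (by linarith)
      linarith
  have hint : Integrable F μ := by
    refine Integrable.mono' (integrable_const (Real.exp (-d))) hmF.aestronglyMeasurable ?_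
    filter_upwards [hFlt] with p hp
    rw [Real.norm_eq_abs, abs_of_nonneg (hFnonneg p)]
    exact le_of_lt hp
  have hnn : 0 ≤ ∫ p, F p ∂μ := integral_nonneg hFnonneg
  have hlt : ∫ p, F p ∂μ < Real.exp (-d) := by
    set G : (Fin n → ℝ) × Bool → ℝ := fun p => Real.exp (-d) - F p with hG
    have hGint : Integrable G μ := (integrable_const (Real.exp (-d))).sub hint
    have hGpos : ∀ᵐ p ∂μ, 0 < G p := by
      filter_upwards [hFlt] with p hp
      simp [hG]; linarith
    have h0 : 0 < ∫ p, G p ∂μ := by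
      rw [integral_pos_iff_support_of_nonneg_ae
        (hGpos.mono fun p hp => le_of_lt hp) hGint]
      have hsub : ∀ᵐ p ∂μ, p ∈ Function.support G := hGpos.mono fun p hp => ne_of_gt hp
      have hcompl : μ (Function.support G)ᶜ = 0 := by
        have := ae_iff.mp hsub
        simpa [Set.compl_def] using this
      by_contra hle
      push_neg at hle
      have hz : μ (Function.support G) = 0 := le_antisymm hle zero_le
      have : μ Set.univ ≤ μ (Function.support G) + μ (Function.support G)ᶜ := by
        rw [← Set.union_compl_self (Function.support G)]
        exact measure_union_le _ _
      rw [hz, hcompl, measure_univ] at this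
      simp at this
    have hGi : ∫ p, G p ∂μ = Real.exp (-d) - ∫ p, F p ∂μ := by
      rw [hG]
      rw [integral_sub (integrable_const _) hint, integral_const, probReal_univ]
      simp
    rw [hGi] at h0
    linarith
  have hdiff : I - Ihat = ∫ p, F p ∂μ := by
    rw [hI2, hIhat]
    ring
  rw [hdiff]
  exact ⟨⟨hnn, hlt⟩, by rw [abs_of_nonneg hnn]; exact hlt⟩
end

section
/- Let E be a measurable space, ρ a probability measure on E, f : E → Bool a measurable labeling function with ρ({x : f x = false}) = 1/2, and let μ be the pushforward of ρ under x ↦ (x, f x). Let d ≥ 0 and let T : E × Bool → ℝ be measurable with T(x, f x) = 0 for ρ-almost every x and T(x, ¬(f x)) ≤ −d for ρ-almost every x. Then the MINE (Donsker–Varadhan) estimate Î = ∫ T dμ − log ∫ e^T d(μ₁ ⊗ μ₂), where μ₁ and μ₂ are the two marginals of μ, satisfies log 2 − e^{−d} ≤ Î ≤ log 2; in particular, since the true mutual information equals log 2 in this setting, |I(X;Y) − Î| ≤ e^{−d}. -/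
open MeasureTheory
open scoped ENNReal

theorem stmt_1 {E : Type*} [MeasurableSpace E] (ρ : Measure E) [IsProbabilityMeasure ρ]
    (f : E → Bool) (hf : Measurable f)
    -- balanced labels
    (hbal : ρ {x | f x = false} = 1/2)
    (d : ℝ) (hd : 0 ≤ d)
    -- the probe
    (T : E × Bool → ℝ) (hT : Measurable T)
    (hT0 : ∀ᵐ x ∂ρ, T (x, f x) = 0)
    (hTd : ∀ᵐ x ∂ρ, T (x, !(f x)) ≤ -d)
    -- the joint distribution, pushforward of `ρ` under `x ↦ (x, f x)`
    (μ : Measure (E × Bool)) (hμ : μ = ρ.map (fun x => (x, f x)))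
    -- the MINE (Donsker–Varadhan) estimate
    (Ihat : ℝ)
    (hIhat : Ihat = (∫ p, T p ∂μ) -
      Real.log (∫ p, Real.exp (T p) ∂((μ.map Prod.fst).prod (μ.map Prod.snd)))) :
    (Real.log 2 - Real.exp (-d) ≤ Ihat ∧ Ihat ≤ Real.log 2) ∧
      -- in particular, since the true mutual information is `log 2` in this setting:
      |Real.log 2 - Ihat| ≤ Real.exp (-d) := by
  have hfm : Measurable fun x : E => (x, f x) := measurable_id.prodMk hf
  set ν : Measure Bool := ρ.map f with hν
  haveI hνprob : IsProbabilityMeasure ν := Measure.isProbabilityMeasure_map hf.aemeasurable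
  have hmap1 : μ.map Prod.fst = ρ := by
    rw [hμ, Measure.map_map measurable_fst hfm,
      show (Prod.fst ∘ fun x : E => (x, f x)) = id from rfl, Measure.map_id]
  have hmap2 : μ.map Prod.snd = ν := by
    rw [hμ, Measure.map_map measurable_snd hfm]
    rfl
  have hνf : ν {false} = 1/2 := by
    rw [hν, Measure.map_apply hf (measurableSet_singleton false)]
    convert hbal using 2
    rfl
  have hνt : ν {true} = 1/2 := by
    have hc : ({true} : Set Bool) = {false}ᶜ := by ext b; cases b <;> simp
    rw [hc, measure_compl (measurableSet_singleton false) (measure_ne_top _ _), hνf,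
      measure_univ]
    exact ENNReal.sub_eq_of_eq_add (by norm_num) (ENNReal.add_halves 1).symm
  have hae : ∀ᵐ x ∂ρ, T (x, f x) = 0 ∧ T (x, !(f x)) ≤ -d := hT0.and hTd
  -- a.e. nonpositivity on the product
  have h1 : ∀ᵐ x ∂ρ, ∀ b, T (x, b) ≤ 0 := by
    filter_upwards [hae] with x hx b
    cases hfx : f x <;> rw [hfx] at hx <;> simp only [Bool.not_false, Bool.not_true] at hx <;>
      cases b <;> linarith [hx.1, hx.2]
  have haeP : ∀ᵐ p ∂(ρ.prod ν), T p ≤ 0 := by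
    have h2 := (Measure.quasiMeasurePreserving_fst (μ := ρ) (ν := ν)).ae h1
    filter_upwards [h2] with p hp
    simpa using hp p.2
  have hint : Integrable (fun p => Real.exp (T p)) (ρ.prod ν) := by
    refine Integrable.mono' (integrable_const 1)
      (Real.measurable_exp.comp hT).aestronglyMeasurable ?_
    filter_upwards [haeP] with p hp
    rw [Real.norm_eq_abs, abs_of_pos (Real.exp_pos _)]
    exact Real.exp_le_one_iff.mpr hp
  set h : E → ℝ := fun x => ∫ b, Real.exp (T (x, b)) ∂ν with hh
  have hinth : Integrable h ρ := hint.integral_prod_left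
  have hZ : ∫ p, Real.exp (T p) ∂(ρ.prod ν) = ∫ x, h x ∂ρ := integral_prod _ hint
  have hcomp : ∀ x, h x = 1/2 * (Real.exp (T (x, false)) + Real.exp (T (x, true))) := by
    intro x
    have hx : h x = ∫ b, Real.exp (T (x, b)) ∂ν := rfl
    rw [hx, integral_fintype (Integrable.of_finite)]
    simp [Fintype.sum_bool, Measure.real, hνf, hνt, ENNReal.toReal_div]
    ring
  have hlow : ∀ᵐ x ∂ρ, (1:ℝ)/2 ≤ h x := by
    filter_upwards [hae] with x hx
    rw [hcomp x]
    cases hfx : f x <;> rw [hfx] at hx <;> simp only [Bool.not_false, Bool.not_true] at hx <;>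
      rw [hx.1, Real.exp_zero] <;>
      [linarith [Real.exp_pos (T (x, true))]; linarith [Real.exp_pos (T (x, false))]]
  have hhigh : ∀ᵐ x ∂ρ, h x ≤ 1/2 * (1 + Real.exp (-d)) := by
    filter_upwards [hae] with x hx
    rw [hcomp x]
    cases hfx : f x <;> rw [hfx] at hx <;> simp only [Bool.not_false, Bool.not_true] at hx <;>
      rw [hx.1, Real.exp_zero] <;>
      [linarith [Real.exp_le_exp.mpr hx.2]; linarith [Real.exp_le_exp.mpr hx.2]]
  set Z : ℝ := ∫ x, h x ∂ρ with hZdef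
  have hZlow : (1:ℝ)/2 ≤ Z := by
    calc (1:ℝ)/2 = ∫ _x, (1:ℝ)/2 ∂ρ := by simp
    _ ≤ Z := integral_mono_ae (integrable_const _) hinth hlow
  have hZhigh : Z ≤ 1/2 * (1 + Real.exp (-d)) := by
    calc Z ≤ ∫ _x, 1/2 * (1 + Real.exp (-d)) ∂ρ :=
          integral_mono_ae hinth (integrable_const _) hhigh
    _ = 1/2 * (1 + Real.exp (-d)) := by simp
  have hZpos : (0:ℝ) < Z := by linarith
  have hI1 : ∫ p, T p ∂μ = 0 := by
    rw [hμ, integral_map hfm.aemeasurable hT.aestronglyMeasurable]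
    exact integral_eq_zero_of_ae hT0
  rw [hmap1, hmap2, hI1, hZ] at hIhat
  -- now Ihat = - log Z
  have hlog1 : Real.log Z ≤ Real.log (1/2 * (1 + Real.exp (-d))) :=
    Real.log_le_log hZpos hZhigh
  have hlog2 : Real.log (1/2 * (1 + Real.exp (-d)))
      = Real.log (1 + Real.exp (-d)) - Real.log 2 := by
    rw [Real.log_mul (by norm_num) (by positivity), one_div, Real.log_inv]
    ring
  have hlog3 : Real.log (1 + Real.exp (-d)) ≤ Real.exp (-d) := by
    have := Real.log_le_sub_one_of_pos (x := 1 + Real.exp (-d)) (by positivity)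
    linarith
  have hlog4 : Real.log ((1:ℝ)/2) ≤ Real.log Z := Real.log_le_log (by norm_num) hZlow
  have hlog5 : Real.log ((1:ℝ)/2) = - Real.log 2 := by
    rw [one_div, Real.log_inv]
  have hub : Ihat ≤ Real.log 2 := by rw [hIhat]; linarith
  have hlb : Real.log 2 - Real.exp (-d) ≤ Ihat := by rw [hIhat]; linarith
  refine ⟨⟨hlb, hub⟩, ?_⟩
  rw [abs_le]
  constructor <;> linarith [Real.exp_pos (-d)]
end

section
/- Let μ be a probability measure on ℝⁿ × Bool that is linearly separable with margin d ≥ 0 via (w, b). Then the expected cross-entropy of the paper's linear probe satisfies E_{(x,y)∼μ}[−log P̂(y|x)] < log(1 + e^{−d}) ≤ e^{−d}, where P̂ is the softmax predicted probability of the probe. -/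
open MeasureTheory
open scoped BigOperators

lemma neg_log_probePred {n : ℕ} (w : Fin n → ℝ) (b d : ℝ) (x : Fin n → ℝ) (y : Bool) :
    -Real.log (probePred w b d x y) =
      Real.log (Real.exp (probeLogit w b d x false) + Real.exp (probeLogit w b d x true))
        - probeLogit w b d x y := by
  unfold probePred
  rw [Real.log_div (Real.exp_ne_zero _) (by positivity), Real.log_exp]
  ring

lemma probeLogit_eq {n : ℕ} (w : Fin n → ℝ) (b d : ℝ) (x : Fin n → ℝ) (y : Bool) :
    probeLogit w b d x y =
      if y = true then -((∑ i, w i * x i) + b) - d else (∑ i, w i * x i) + b := by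
  cases y <;> simp [probeLogit]

lemma nl_nonneg {n : ℕ} (w : Fin n → ℝ) (b d : ℝ) (x : Fin n → ℝ) (y : Bool) :
    0 ≤ -Real.log (probePred w b d x y) := by
  rw [neg_log_probePred, sub_nonneg]
  calc probeLogit w b d x y = Real.log (Real.exp (probeLogit w b d x y)) := (Real.log_exp _).symm
    _ ≤ _ := by
        apply Real.log_le_log (Real.exp_pos _)
        cases y
        · exact le_add_of_nonneg_right (Real.exp_pos _).le
        · exact le_add_of_nonneg_left (Real.exp_pos _).le

lemma nl_lt {n : ℕ} (w : Fin n → ℝ) (b d : ℝ) (x : Fin n → ℝ) (y : Bool)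
    (h0 : y = false → 0 < (∑ i, w i * x i) + b)
    (h1 : y = true → (∑ i, w i * x i) + b < -d) :
    -Real.log (probePred w b d x y) < Real.log (1 + Real.exp (-d)) := by
  set s := (∑ i, w i * x i) + b with hs
  rw [neg_log_probePred]
  cases y
  · -- f = log(e^s + e^{-s-d}) - s < log(1+e^{-d})
    have hspos := h0 rfl
    have key : Real.exp s + Real.exp (-s - d) < Real.exp s * (1 + Real.exp (-d)) := by
      rw [mul_add, mul_one, ← Real.exp_add]
      have : -s - d < s + -d := by linarith
      linarith [Real.exp_lt_exp.2 this]
    have := Real.log_lt_log (by positivity) key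
    rw [Real.log_mul (Real.exp_ne_zero _) (by positivity), Real.log_exp] at this
    simp only [probeLogit]
    rw [← hs]
    linarith
  · have hsneg := h1 rfl
    have key : Real.exp s + Real.exp (-s - d) < Real.exp (-s - d) * (1 + Real.exp (-d)) := by
      rw [mul_add, mul_one, ← Real.exp_add]
      have : s < -s - d + -d := by linarith
      linarith [Real.exp_lt_exp.2 this]
    have := Real.log_lt_log (by positivity) key
    rw [Real.log_mul (Real.exp_ne_zero _) (by positivity), Real.log_exp] at this
    simp only [probeLogit]
    rw [← hs]
    linarith

theorem stmt_2 {n : ℕ} (μ : Measure ((Fin n → ℝ) × Bool)) [IsProbabilityMeasure μ]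
    (w : Fin n → ℝ) (b d : ℝ) (hd : 0 ≤ d)
    -- linear separability with margin `d` via `(w, b)`
    (hsep : ∀ᵐ p ∂μ, (p.2 = false → 0 < (∑ i, w i * p.1 i) + b) ∧
      (p.2 = true → (∑ i, w i * p.1 i) + b < -d)) :
    (∫ p, -Real.log (probePred w b d p.1 p.2) ∂μ) < Real.log (1 + Real.exp (-d)) ∧
      Real.log (1 + Real.exp (-d)) ≤ Real.exp (-d) := by
  set C := Real.log (1 + Real.exp (-d)) with hC
  set f : (Fin n → ℝ) × Bool → ℝ := fun p => -Real.log (probePred w b d p.1 p.2) with hf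
  have hmeas : Measurable f := by
    have hS : Measurable fun p : (Fin n → ℝ) × Bool => (∑ i, w i * p.1 i) + b := by
      fun_prop
    have hL : Measurable fun p : (Fin n → ℝ) × Bool => probeLogit w b d p.1 p.2 := by
      simp only [probeLogit_eq]
      exact Measurable.ite (measurable_snd (measurableSet_singleton true))
        ((hS.neg).sub measurable_const) hS
    have hL0 : Measurable fun p : (Fin n → ℝ) × Bool => probeLogit w b d p.1 false := by
      simp only [probeLogit]; fun_prop
    have hL1 : Measurable fun p : (Fin n → ℝ) × Bool => probeLogit w b d p.1 true := by
      simp only [probeLogit]; fun_prop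
    have : Measurable fun p : (Fin n → ℝ) × Bool => probePred w b d p.1 p.2 := by
      unfold probePred
      exact (hL.exp).div ((hL0.exp).add (hL1.exp))
    exact (Real.measurable_log.comp this).neg
  have hlt : ∀ᵐ p ∂μ, f p < C := by
    filter_upwards [hsep] with p hp
    exact nl_lt w b d p.1 p.2 hp.1 hp.2
  have hnn : ∀ p, 0 ≤ f p := fun p => nl_nonneg w b d p.1 p.2
  have hint : Integrable f μ := by
    refine Integrable.mono' (integrable_const C) hmeas.aestronglyMeasurable ?_
    filter_upwards [hlt] with p hp
    rw [Real.norm_eq_abs, abs_of_nonneg (hnn p)]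
    exact hp.le
  constructor
  · by_contra hcon
    push_neg at hcon
    -- ∫ f ≥ C; but ∫ (C - f) > 0
    have hg : Integrable (fun p => C - f p) μ := (integrable_const C).sub hint
    have hgnn : 0 ≤ᵐ[μ] fun p => C - f p := by
      filter_upwards [hlt] with p hp
      simp only [Pi.zero_apply]
      linarith
    have hpos : 0 < ∫ p, (C - f p) ∂μ := by
      rw [integral_pos_iff_support_of_nonneg_ae hgnn hg]
      have hnull : μ (Function.support fun p => C - f p)ᶜ = 0 := by
        apply measure_mono_null _ (by
          have : μ {p | ¬ f p < C} = 0 := hlt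
          exact this)
        intro p hp
        simp only [Function.mem_support, Set.mem_compl_iff, not_not] at hp
        simp only [Set.mem_setOf_eq, not_lt]
        linarith [sub_eq_zero.mp hp]
      have hone : (1:ENNReal) ≤ μ (Function.support fun p => C - f p) := by
        calc (1:ENNReal) = μ Set.univ := (measure_univ (μ := μ)).symm
          _ = μ ((Function.support fun p => C - f p) ∪ (Function.support fun p => C - f p)ᶜ) := by
              rw [Set.union_compl_self]
          _ ≤ _ + _ := measure_union_le _ _
          _ = μ (Function.support fun p => C - f p) := by rw [hnull, add_zero]
      exact lt_of_lt_of_le zero_lt_one hone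
    rw [integral_sub (integrable_const C) hint, integral_const] at hpos
    simp at hpos
    linarith
  · have h1 : (0:ℝ) < 1 + Real.exp (-d) := by positivity
    have := Real.log_le_sub_one_of_pos h1
    linarith
end

section
/- Let μ and ν be probability measures on a measurable space Ω, let d ≥ 0 and c ∈ ℝ, and let T : Ω → ℝ be measurable with T = c μ-almost everywhere and T ≤ c − d ν-almost everywhere. Then 0 ≤ log(∫ e^T dμ + ∫ e^T dν) − ∫ T dμ ≤ e^{−d}. -/
open MeasureTheory

theorem stmt_4 {Ω : Type*} [MeasurableSpace Ω] (μ ν : Measure Ω)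
    [IsProbabilityMeasure μ] [IsProbabilityMeasure ν]
    (d c : ℝ) (hd : 0 ≤ d) (T : Ω → ℝ) (hT : Measurable T)
    (hμ : ∀ᵐ x ∂μ, T x = c) (hν : ∀ᵐ x ∂ν, T x ≤ c - d) :
    0 ≤ Real.log ((∫ x, Real.exp (T x) ∂μ) + ∫ x, Real.exp (T x) ∂ν) - ∫ x, T x ∂μ ∧
      Real.log ((∫ x, Real.exp (T x) ∂μ) + ∫ x, Real.exp (T x) ∂ν) - (∫ x, T x ∂μ) ≤
        Real.exp (-d) := by
  have hTμ : ∫ x, T x ∂μ = c := by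
    rw [integral_congr_ae hμ]; simp
  have hEμ : ∫ x, Real.exp (T x) ∂μ = Real.exp c := by
    have : ∀ᵐ x ∂μ, Real.exp (T x) = Real.exp c := hμ.mono fun x hx => by rw [hx]
    rw [integral_congr_ae this]; simp
  have hint : Integrable (fun x => Real.exp (T x)) ν := by
    refine Integrable.mono' (integrable_const (Real.exp (c - d))) (hT.exp.aestronglyMeasurable) ?_
    exact hν.mono fun x hx => by
      rw [Real.norm_eq_abs, abs_of_pos (Real.exp_pos _)]
      exact Real.exp_le_exp.2 hx
  have hν0 : 0 ≤ ∫ x, Real.exp (T x) ∂ν :=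
    integral_nonneg fun x => (Real.exp_pos _).le
  have hνle : ∫ x, Real.exp (T x) ∂ν ≤ Real.exp (c - d) := by
    calc ∫ x, Real.exp (T x) ∂ν ≤ ∫ _x, Real.exp (c - d) ∂ν := by
          refine integral_mono_ae hint (integrable_const _) ?_
          exact hν.mono fun x hx => Real.exp_le_exp.2 hx
      _ = Real.exp (c - d) := by simp
  rw [hTμ, hEμ]
  constructor
  · have h1 : Real.exp c ≤ Real.exp c + ∫ x, Real.exp (T x) ∂ν := by linarith
    have := Real.log_le_log (Real.exp_pos c) h1
    rw [Real.log_exp] at this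
    linarith
  · have hpos : (0:ℝ) < Real.exp c + ∫ x, Real.exp (T x) ∂ν := by
      have := Real.exp_pos c; linarith
    have key : Real.log (Real.exp c + ∫ x, Real.exp (T x) ∂ν) - c =
        Real.log (1 + (∫ x, Real.exp (T x) ∂ν) * Real.exp (-c)) := by
      rw [← Real.log_exp c, ← Real.log_div (by positivity) (Real.exp_ne_zero c)]
      · rw [Real.log_exp]
        congr 1
        field_simp [Real.exp_ne_zero, Real.exp_neg]
        rw [mul_add, mul_one, mul_left_comm, ← Real.exp_add, add_neg_cancel, Real.exp_zero, mul_one]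
    rw [key]
    have hx0 : 0 ≤ (∫ x, Real.exp (T x) ∂ν) * Real.exp (-c) := by positivity
    have hlog : Real.log (1 + (∫ x, Real.exp (T x) ∂ν) * Real.exp (-c)) ≤
        (∫ x, Real.exp (T x) ∂ν) * Real.exp (-c) := by
      have := Real.add_one_le_exp ((∫ x, Real.exp (T x) ∂ν) * Real.exp (-c))
      calc Real.log (1 + (∫ x, Real.exp (T x) ∂ν) * Real.exp (-c))
          ≤ Real.log (Real.exp ((∫ x, Real.exp (T x) ∂ν) * Real.exp (-c))) :=
            Real.log_le_log (by linarith) (by linarith)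
        _ = _ := Real.log_exp _
    have hbound : (∫ x, Real.exp (T x) ∂ν) * Real.exp (-c) ≤ Real.exp (-d) := by
      calc (∫ x, Real.exp (T x) ∂ν) * Real.exp (-c)
          ≤ Real.exp (c - d) * Real.exp (-c) :=
            mul_le_mul_of_nonneg_right hνle (Real.exp_pos _).le
        _ = Real.exp (-d) := by rw [← Real.exp_add]; ring_nf
    linarith
end

section
/- Let E be a measurable space, S a finite set (of labels), ρ a probability measure on E, and f : E → S a measurable labeling function. Let μ be the pushforward of ρ under x ↦ (x, f x). Then the Kullback–Leibler divergence of μ with respect to the product of its two marginals equals the Shannon entropy of the label marginal, −∑_{s∈S} ρ(f⁻¹{s}) · log ρ(f⁻¹{s}) (with the convention 0 · log 0 = 0); that is, when the label is fully determined by the input, I(X; Y) = H(Y). -/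
open MeasureTheory
open scoped ENNReal Classical BigOperators

theorem stmt_6 {E : Type*} [MeasurableSpace E]
    {S : Type*} [Fintype S] [MeasurableSpace S] [MeasurableSingletonClass S]
    (ρ : Measure E) [IsProbabilityMeasure ρ]
    (f : E → S) (hf : Measurable f)
    -- the joint distribution, pushforward of `ρ` under `x ↦ (x, f x)`
    (μ : Measure (E × S)) (hμ : μ = ρ.map (fun x => (x, f x))) :
    klDiv μ ((μ.map Prod.fst).prod (μ.map Prod.snd)) =
      ((-∑ s : S, (ρ (f ⁻¹' {s})).toReal * Real.log (ρ (f ⁻¹' {s})).toReal : ℝ) : EReal) := by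
  classical
  set p : S → ℝ≥0∞ := fun s => ρ (f ⁻¹' {s}) with hp
  set e : E → E × S := fun x => (x, f x) with he
  have hfm : Measurable e := measurable_id.prodMk hf
  have hmap1 : μ.map Prod.fst = ρ := by
    rw [hμ, Measure.map_map measurable_fst hfm]
    have h : Prod.fst ∘ e = id := rfl
    rw [h, Measure.map_id]
  have hmap2 : μ.map Prod.snd = ρ.map f := by
    rw [hμ, Measure.map_map measurable_snd hfm]
    rfl
  rw [hmap1, hmap2]
  haveI : IsProbabilityMeasure (ρ.map f) := Measure.isProbabilityMeasure_map hf.aemeasurable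
  set ν : Measure (E × S) := ρ.prod (ρ.map f) with hν
  have hpmap : ∀ s : S, (ρ.map f) {s} = p s := fun s => by
    rw [Measure.map_apply hf (measurableSet_singleton s)]
  set g : E × S → ℝ≥0∞ := fun z => if f z.1 = z.2 then (p z.2)⁻¹ else 0 with hgdef
  have hD : MeasurableSet {z : E × S | f z.1 = z.2} := by
    have : {z : E × S | f z.1 = z.2} = ⋃ s : S, (f ⁻¹' {s}) ×ˢ ({s} : Set S) := by
      ext z
      simp only [Set.mem_setOf_eq, Set.mem_iUnion, Set.mem_prod, Set.mem_preimage,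
        Set.mem_singleton_iff]
      exact ⟨fun h => ⟨z.2, h, rfl⟩, fun ⟨s, h1, h2⟩ => h2 ▸ h1⟩
    rw [this]
    exact MeasurableSet.iUnion fun s =>
      (hf (measurableSet_singleton s)).prod (measurableSet_singleton s)
  have hg : Measurable g := by
    have h1 : Measurable fun z : E × S => (p z.2)⁻¹ :=
      (measurable_of_countable fun s : S => (p s)⁻¹).comp measurable_snd
    have : g = {z : E × S | f z.1 = z.2}.indicator fun z => (p z.2)⁻¹ := by
      ext z
      by_cases h : f z.1 = z.2 <;> simp [hgdef, Set.indicator_apply, h]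
    rw [this]
    exact h1.indicator hD
  have hρ0 : ∀ᵐ x ∂ρ, p (f x) ≠ 0 := by
    rw [MeasureTheory.ae_iff]
    have hset : {x : E | ¬p (f x) ≠ 0} = ⋃ s ∈ {s : S | p s = 0}, f ⁻¹' {s} := by
      ext x
      simp
    rw [hset]
    exact (measure_biUnion_null_iff (Set.to_countable _)).2 fun s hs => hs
  have hwd : μ = ν.withDensity g := by
    ext B hB
    rw [withDensity_apply _ hB, hμ, Measure.map_apply hfm hB,
      ← lintegral_indicator hB g, hν, lintegral_prod _ (hg.indicator hB).aemeasurable]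
    have hinner : ∀ᵐ x ∂ρ,
        (∫⁻ s, B.indicator g (x, s) ∂(ρ.map f)) = (e ⁻¹' B).indicator (fun _ => 1) x := by
      filter_upwards [hρ0] with x hx
      rw [lintegral_fintype]
      have hterm : ∀ s : S, B.indicator g (x, s) * (ρ.map f) {s}
          = if s = f x then (if (x, s) ∈ B then (1 : ℝ≥0∞) else 0) else 0 := by
        intro s
        rw [hpmap]
        by_cases h1 : f x = s
        · subst h1
          by_cases h2 : (x, f x) ∈ B
          · simp [Set.indicator_of_mem h2, hgdef,
              ENNReal.inv_mul_cancel hx (measure_ne_top ρ _), h2]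
          · simp [Set.indicator_of_notMem h2, h2]
        · have h1' : ¬ s = f x := fun h => h1 h.symm
          simp [Set.indicator_apply, hgdef, h1, h1']
      rw [Finset.sum_congr rfl fun s _ => hterm s, Finset.sum_ite_eq' Finset.univ (f x)]
      simp [Set.indicator_apply, he]
    rw [lintegral_congr_ae hinner, lintegral_indicator (hfm hB)]
    simp
  have hac : μ ≪ ν := hwd ▸ withDensity_absolutelyContinuous ν g
  have hrn : μ.rnDeriv ν =ᵐ[ν] g := hwd ▸ Measure.rnDeriv_withDensity ν hg
  have hrnμ : μ.rnDeriv ν =ᵐ[μ] g := hac.ae_le hrn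
  have hD' : MeasurableSet {z : E × S | f z.1 = z.2 ∧ p z.2 ≠ 0} := by
    have hEq : {z : E × S | f z.1 = z.2 ∧ p z.2 ≠ 0}
        = {z : E × S | f z.1 = z.2} ∩ Prod.snd ⁻¹' {s : S | p s ≠ 0} := rfl
    rw [hEq]
    exact hD.inter (measurable_snd ((Set.to_countable _).measurableSet))
  have hμae : ∀ᵐ z : E × S ∂μ, f z.1 = z.2 ∧ p z.2 ≠ 0 := by
    rw [hμ, ae_map_iff hfm.aemeasurable hD']
    filter_upwards [hρ0] with x hx
    exact ⟨rfl, hx⟩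
  have hllr : llr μ ν =ᵐ[μ] fun z : E × S => -Real.log (p z.2).toReal := by
    filter_upwards [hrnμ, hμae] with z hz hz'
    show Real.log (μ.rnDeriv ν z).toReal = -Real.log (p z.2).toReal
    rw [hz]
    simp [hgdef, hz'.1, ENNReal.toReal_inv, Real.log_inv]
  set h0 : S → ℝ := fun s => -Real.log (p s).toReal with hh0
  have hh0m : Measurable h0 := measurable_of_countable h0
  have hkey : Integrable (fun x => h0 (f x)) ρ := by
    have h2 : Integrable h0 (ρ.map f) := Integrable.of_finite
    exact (integrable_map_measure hh0m.aestronglyMeasurable hf.aemeasurable).mp h2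
  have hint0 : Integrable (fun z : E × S => h0 z.2) μ := by
    rw [hμ]
    exact (integrable_map_measure (g := fun z : E × S => h0 z.2)
      ((hh0m.comp measurable_snd).aestronglyMeasurable) hfm.aemeasurable).mpr hkey
  have hint : Integrable (llr μ ν) μ := hint0.congr hllr.symm
  have hval : ∫ z, llr μ ν z ∂μ
      = -∑ s : S, (p s).toReal * Real.log (p s).toReal := by
    rw [integral_congr_ae hllr, hμ]
    rw [integral_map (f := fun z : E × S => -Real.log (p z.2).toReal) hfm.aemeasurable
      ((hh0m.comp measurable_snd).aestronglyMeasurable)]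
    have h1 : ∫ x, h0 (f x) ∂ρ = ∫ s, h0 s ∂(ρ.map f) :=
      (integral_map hf.aemeasurable hh0m.aestronglyMeasurable).symm
    show ∫ x, h0 (f x) ∂ρ = _
    rw [h1, integral_fintype (f := h0) Integrable.of_finite]
    simp only [hh0, smul_eq_mul, measureReal_def, hpmap, mul_neg, Finset.sum_neg_distrib]
  rw [klDiv, if_pos ⟨hac, hint⟩, hval]
end

section
/- Consider a C-way classification task (C ≥ 2) on a probability space (Ω, μ), with measurable label map Y : Ω → Fin C whose distribution has Shannon entropy H(Y), a measurable function p : Ω → ℝ giving the model's predicted probability of the true label, and a measurable set A ⊆ Ω of correctly predicted samples with accuracy a = μ(A). Suppose ε > 0, that 1/C < p(ω) ≤ 1 for all ω ∈ A, and that ε ≤ p(ω) < 1/2 for all ω ∉ A. Then the MI estimate Î = H(Y) + ∫ log p dμ is bounded by the accuracy as: H(Y) − a·log C + (1 − a)·log ε ≤ Î ≤ H(Y) − (1 − a)·log 2. -/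
open MeasureTheory
open scoped BigOperators

theorem stmt_9 {Ω : Type*} [MeasurableSpace Ω] (μ : Measure Ω) [IsProbabilityMeasure μ]
    (C : ℕ) (hC : 2 ≤ C)
    (Y : Ω → Fin C) (hY : Measurable Y)
    -- Shannon entropy of the label distribution
    (HY : ℝ) (hHY : HY = -∑ k : Fin C, (μ (Y ⁻¹' {k})).toReal * Real.log (μ (Y ⁻¹' {k})).toReal)
    -- predicted probability of the true label
    (p : Ω → ℝ) (hp : Measurable p)
    -- set of correctly predicted samples, and the accuracy
    (A : Set Ω) (hA : MeasurableSet A)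
    (a : ℝ) (ha : a = (μ A).toReal)
    (ε : ℝ) (hε : 0 < ε)
    (hcorrect : ∀ ω ∈ A, 1 / (C : ℝ) < p ω ∧ p ω ≤ 1)
    (hwrong : ∀ ω ∉ A, ε ≤ p ω ∧ p ω < 1 / 2)
    -- the MI estimate
    (Ihat : ℝ) (hIhat : Ihat = HY + ∫ ω, Real.log (p ω) ∂μ) :
    HY - a * Real.log C + (1 - a) * Real.log ε ≤ Ihat ∧
      Ihat ≤ HY - (1 - a) * Real.log 2 := by
  have hCpos : (0:ℝ) < C := by positivity
  have hC1 : (1:ℝ) ≤ C := by exact_mod_cast Nat.one_le_of_lt hC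
  have hlogC : 0 ≤ Real.log C := Real.log_nonneg hC1
  -- pointwise bounds on log p
  have hA_bounds : ∀ ω ∈ A, -Real.log C ≤ Real.log (p ω) ∧ Real.log (p ω) ≤ 0 := by
    intro ω hω
    obtain ⟨h1, h2⟩ := hcorrect ω hω
    have hppos : 0 < p ω := lt_trans (by positivity) h1
    constructor
    · have := Real.log_le_log (by positivity) h1.le
      rwa [Real.log_div one_ne_zero (ne_of_gt hCpos), Real.log_one, zero_sub] at this
    · exact Real.log_nonpos hppos.le h2
  have hAc_bounds : ∀ ω ∉ A, Real.log ε ≤ Real.log (p ω) ∧ Real.log (p ω) ≤ -Real.log 2 := by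
    intro ω hω
    obtain ⟨h1, h2⟩ := hwrong ω hω
    constructor
    · exact Real.log_le_log hε h1
    · have := Real.log_le_log (lt_of_lt_of_le hε h1) h2.le
      rwa [Real.log_div one_ne_zero two_ne_zero, Real.log_one, zero_sub] at this
  -- integrability
  set M : ℝ := max (Real.log C) (max |Real.log ε| (Real.log 2)) with hM
  have hbound : ∀ ω, |Real.log (p ω)| ≤ M := by
    intro ω
    by_cases hω : ω ∈ A
    · obtain ⟨h1, h2⟩ := hA_bounds ω hω
      refine le_trans (abs_le.2 ⟨h1, le_trans h2 hlogC⟩) (le_max_left _ _)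
    · obtain ⟨h1, h2⟩ := hAc_bounds ω hω
      have h2' : Real.log (p ω) ≤ 0 :=
        le_trans h2 (by simpa using neg_nonpos.2 (Real.log_nonneg one_le_two))
      have : |Real.log (p ω)| ≤ |Real.log ε| := by
        rw [abs_of_nonpos h2']
        calc -Real.log (p ω) ≤ -Real.log ε := by linarith
        _ ≤ |Real.log ε| := neg_le_abs _
      exact le_trans this (le_trans (le_max_left _ _) (le_max_right _ _))
  have hint : Integrable (fun ω => Real.log (p ω)) μ := by
    refine Integrable.mono' (integrable_const M)
      ((Real.measurable_log.comp hp).aestronglyMeasurable) ?_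
    exact Filter.Eventually.of_forall hbound
  -- measures
  have haA : (μ A).toReal = a := ha.symm
  have haAc : (μ Aᶜ).toReal = 1 - a := by
    rw [prob_compl_eq_one_sub hA, ENNReal.toReal_sub_of_le prob_le_one ENNReal.one_ne_top]
    simp [ha]
  -- split integral
  have hsplit : ∫ ω, Real.log (p ω) ∂μ
      = (∫ ω in A, Real.log (p ω) ∂μ) + ∫ ω in Aᶜ, Real.log (p ω) ∂μ :=
    (integral_add_compl hA hint).symm
  have hIA_le : ∫ ω in A, Real.log (p ω) ∂μ ≤ 0 := by
    have := setIntegral_mono_on hint.integrableOn (integrableOn_const (measure_lt_top μ A).ne)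
      hA (fun ω hω => (hA_bounds ω hω).2)
    simpa using this
  have hIA_ge : -(a * Real.log C) ≤ ∫ ω in A, Real.log (p ω) ∂μ := by
    have := setIntegral_mono_on (integrableOn_const (measure_lt_top μ A).ne)
      hint.integrableOn hA (fun ω hω => (hA_bounds ω hω).1)
    rw [setIntegral_const, measureReal_def, haA] at this
    calc -(a * Real.log C) = a * -Real.log C := by ring
    _ ≤ _ := by simpa [smul_eq_mul] using this
  have hIAc_le : ∫ ω in Aᶜ, Real.log (p ω) ∂μ ≤ (1 - a) * (-Real.log 2) := by
    have := setIntegral_mono_on hint.integrableOn (integrableOn_const (measure_lt_top μ Aᶜ).ne)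
      hA.compl (fun ω hω => (hAc_bounds ω hω).2)
    rw [setIntegral_const, measureReal_def, haAc] at this
    simpa [smul_eq_mul] using this
  have hIAc_ge : (1 - a) * Real.log ε ≤ ∫ ω in Aᶜ, Real.log (p ω) ∂μ := by
    have := setIntegral_mono_on (integrableOn_const (measure_lt_top μ Aᶜ).ne)
      hint.integrableOn hA.compl (fun ω hω => (hAc_bounds ω hω).1)
    rw [setIntegral_const, measureReal_def, haAc] at this
    simpa [smul_eq_mul] using this
  constructor
  · rw [hIhat, hsplit]; nlinarith [hIA_ge, hIAc_ge]
  · rw [hIhat, hsplit]; nlinarith [hIA_le, hIAc_le]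
end
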